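/- arXiv:0902.0286 — 5 statements merged into one kernel-verified Lean document; each statement's English description precedes it below -/
import Mathlib

section
/- Let u : [0,∞) → H be absolutely continuous into a Hilbert space H, and let h : [0,∞) → (0,∞) be continuous, decreasing, with h → 0 at infinity and √h integrable on (0,∞). If ∫_t^∞ ‖u_t(s)‖² ds ≤ h(t) for all t > 0, then ‖u(t) - u(τ)‖ ≤ ∫_{t-1}^∞ √(h(s)) ds for all 1 < t ≤ τ < ∞. -/
open MeasureTheory Filter Topology Set
open scoped ENNReal NNReal

-- union of unit Ioc's
lemma union_Ioc (a : ℝ) : Set.Ioi a = ⋃ n : ℕ, Set.Ioc (a + n) (a + n + 1) := by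
  ext s
  simp only [Set.mem_Ioi, Set.mem_iUnion, Set.mem_Ioc]
  constructor
  · intro hs
    refine ⟨⌈s - a⌉₊ - 1, ?_, ?_⟩
    · have h1 : (1:ℕ) ≤ ⌈s - a⌉₊ := Nat.one_le_ceil_iff.2 (by linarith)
      have := Nat.ceil_lt_add_one (le_of_lt (by linarith : (0:ℝ) < s - a))
      push_cast [Nat.cast_sub h1]
      linarith
    · have := Nat.le_ceil (s - a)
      have h1 : (1:ℕ) ≤ ⌈s - a⌉₊ := Nat.one_le_ceil_iff.2 (by linarith)
      push_cast [Nat.cast_sub h1]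
      linarith
  · rintro ⟨n, h1, _⟩
    have : (0:ℝ) ≤ n := Nat.cast_nonneg n
    linarith

lemma pd_Ioc (a : ℝ) : Pairwise (Function.onFun Disjoint (fun n : ℕ => Set.Ioc (a + n) (a + n + 1))) := by
  intro m n hmn
  simp only [Function.onFun, Set.Ioc_disjoint_Ioc]
  rcases lt_or_gt_of_ne hmn with hc | hc
  · have : (m:ℝ) + 1 ≤ n := by exact_mod_cast hc
    calc min (a + m + 1) (a + n + 1) ≤ a + m + 1 := min_le_left _ _
    _ ≤ a + n := by linarith
    _ ≤ max (a + m) (a + n) := le_max_right _ _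
  · have : (n:ℝ) + 1 ≤ m := by exact_mod_cast hc
    calc min (a + m + 1) (a + n + 1) ≤ a + n + 1 := min_le_right _ _
    _ ≤ a + m := by linarith
    _ ≤ max (a + m) (a + n) := le_max_left _ _

lemma holder_unit {a : ℝ} {f : ℝ → ℝ≥0∞} (hf : AEMeasurable f (volume.restrict (Set.Ioc a (a+1)))) :
    ∫⁻ s in Set.Ioc a (a+1), f s ≤ (∫⁻ s in Set.Ioc a (a+1), f s ^ (2:ℝ)) ^ (1/2:ℝ) := by
  have := ENNReal.lintegral_mul_le_Lp_mul_Lq (volume.restrict (Set.Ioc a (a+1)))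
    Real.HolderConjugate.two_two hf aemeasurable_const (g := fun _ => 1)
  simp only [Pi.mul_apply, mul_one, ENNReal.one_rpow, lintegral_const,
    Measure.restrict_apply, MeasurableSet.univ, Set.univ_inter] at this
  have hμ : volume (Set.Ioc a (a+1)) = 1 := by
    rw [Real.volume_Ioc]; norm_num
  rw [hμ] at this
  simpa using this

lemma unit_bound {H : Type*} [NormedAddCommGroup H] (u' : ℝ → H) (h : ℝ → ℝ) {a : ℝ}
    (ha : 0 < a) (hha : 0 ≤ h a)
    (hint : IntegrableOn (fun s => ‖u' s‖ ^ 2) (Set.Ioi a))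
    (htail : ∫ s in Set.Ioi a, ‖u' s‖ ^ 2 ≤ h a)
    (hm : AEMeasurable (fun s => (‖u' s‖₊ : ℝ≥0∞)) (volume.restrict (Set.Ioc a (a+1)))) :
    ∫⁻ s in Set.Ioc a (a+1), (‖u' s‖₊ : ℝ≥0∞) ≤ ENNReal.ofReal (Real.sqrt (h a)) := by
  have key : ∀ s, ((‖u' s‖₊ : ℝ≥0∞)) ^ (2:ℝ) = ENNReal.ofReal (‖u' s‖ ^ 2) := by
    intro s
    rw [← enorm_eq_nnnorm, ← ofReal_norm, ENNReal.ofReal_rpow_of_nonneg (norm_nonneg _) (by norm_num)]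
    norm_num [Real.rpow_natCast]
  have h2 : ∫⁻ s in Set.Ioc a (a+1), (‖u' s‖₊ : ℝ≥0∞) ^ (2:ℝ) ≤ ENNReal.ofReal (h a) := by
    calc ∫⁻ s in Set.Ioc a (a+1), (‖u' s‖₊ : ℝ≥0∞) ^ (2:ℝ)
        ≤ ∫⁻ s in Set.Ioi a, (‖u' s‖₊ : ℝ≥0∞) ^ (2:ℝ) :=
          lintegral_mono_set Set.Ioc_subset_Ioi_self
      _ = ∫⁻ s in Set.Ioi a, ENNReal.ofReal (‖u' s‖ ^ 2) := by simp_rw [key]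
      _ = ENNReal.ofReal (∫ s in Set.Ioi a, ‖u' s‖ ^ 2) :=
          (ofReal_integral_eq_lintegral_ofReal hint
            (Filter.Eventually.of_forall fun s => by positivity)).symm
      _ ≤ ENNReal.ofReal (h a) := ENNReal.ofReal_le_ofReal htail
  calc ∫⁻ s in Set.Ioc a (a+1), (‖u' s‖₊ : ℝ≥0∞)
      ≤ (∫⁻ s in Set.Ioc a (a+1), (‖u' s‖₊ : ℝ≥0∞) ^ (2:ℝ)) ^ (1/2:ℝ) := holder_unit hm
    _ ≤ (ENNReal.ofReal (h a)) ^ (1/2:ℝ) := ENNReal.rpow_le_rpow h2 (by norm_num)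
    _ = ENNReal.ofReal (Real.sqrt (h a)) := by
        rw [ENNReal.ofReal_rpow_of_nonneg hha (by norm_num), Real.sqrt_eq_rpow]

lemma sqrt_bound (h : ℝ → ℝ) {a : ℝ} (ha : 1 ≤ a)
    (hdec : AntitoneOn h (Set.Ici 0))
    (hsqrt : IntegrableOn (fun s => Real.sqrt (h s)) (Set.Ioi 0)) :
    ENNReal.ofReal (Real.sqrt (h a)) ≤
      ∫⁻ s in Set.Ioc (a-1) a, ENNReal.ofReal (Real.sqrt (h s)) := by
  have hsub : Set.Ioc (a-1) a ⊆ Set.Ioi 0 := fun s hs => by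
    simp only [Set.mem_Ioc] at hs; simp only [Set.mem_Ioi]; linarith [hs.1]
  have hi : IntegrableOn (fun s => Real.sqrt (h s)) (Set.Ioc (a-1) a) :=
    hsqrt.mono_set hsub
  have hreal : Real.sqrt (h a) ≤ ∫ s in Set.Ioc (a-1) a, Real.sqrt (h s) := by
    have hconst : Real.sqrt (h a) = ∫ _ in Set.Ioc (a-1) a, Real.sqrt (h a) := by
      rw [setIntegral_const]
      simp [Real.volume_Ioc]
    rw [hconst]
    refine setIntegral_mono_on (integrableOn_const ?_) hi measurableSet_Ioc ?_
    · rw [Real.volume_Ioc]; exact ENNReal.ofReal_ne_top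
    · intro s hs
      exact Real.sqrt_le_sqrt (hdec (by simp only [Set.mem_Ici]; linarith [hs.1])
        (by simp only [Set.mem_Ici]; linarith) hs.2)
  calc ENNReal.ofReal (Real.sqrt (h a))
      ≤ ENNReal.ofReal (∫ s in Set.Ioc (a-1) a, Real.sqrt (h s)) :=
        ENNReal.ofReal_le_ofReal hreal
    _ = ∫⁻ s in Set.Ioc (a-1) a, ENNReal.ofReal (Real.sqrt (h s)) :=
        ofReal_integral_eq_lintegral_ofReal hi
          (Filter.Eventually.of_forall fun s => Real.sqrt_nonneg _)

theorem stmt1_complete {H : Type*} [NormedAddCommGroup H] [NormedSpace ℝ H] [CompleteSpace H]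
    (u u' : ℝ → H) (h : ℝ → ℝ)
    (hderiv : ∀ t > (0:ℝ), HasDerivAt u (u' t) t)
    (hint : ∀ t > (0:ℝ), IntegrableOn (fun s => ‖u' s‖ ^ 2) (Set.Ioi t))
    (hcont : Continuous h)
    (hpos : ∀ t ≥ (0:ℝ), 0 < h t)
    (hdec : AntitoneOn h (Set.Ici 0))
    (hlim : Tendsto h atTop (𝓝 0))
    (hsqrt : IntegrableOn (fun s => Real.sqrt (h s)) (Set.Ioi 0))
    (htail : ∀ t > (0:ℝ), ∫ s in Set.Ioi t, ‖u' s‖ ^ 2 ≤ h t) :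
    ∀ t τ : ℝ, 1 < t → t ≤ τ →
      ‖u t - u τ‖ ≤ ∫ s in Set.Ioi (t - 1), Real.sqrt (h s) := by
  intro t τ ht htτ
  -- measurability of u'
  have hder_eq : ∀ s ∈ Set.Ioi (0:ℝ), deriv u s = u' s := fun s hs =>
    (hderiv s hs).deriv
  have hm0 : AEStronglyMeasurable u' (volume.restrict (Set.Ioi (0:ℝ))) :=
    (stronglyMeasurable_deriv u).aestronglyMeasurable.congr
      ((ae_restrict_mem measurableSet_Ioi).mono fun s hs => hder_eq s hs)
  have hmt : AEStronglyMeasurable u' (volume.restrict (Set.Ioi t)) :=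
    hm0.mono_measure (Measure.restrict_mono (Set.Ioi_subset_Ioi (by linarith)) le_rfl)
  -- RHS nonneg and integrable
  have hsub1 : Set.Ioi (t-1) ⊆ Set.Ioi (0:ℝ) := Set.Ioi_subset_Ioi (by linarith)
  have hsq1 : IntegrableOn (fun s => Real.sqrt (h s)) (Set.Ioi (t-1)) :=
    hsqrt.mono_set hsub1
  -- key lintegral bound
  have hI : ∫⁻ s in Set.Ioi t, (‖u' s‖₊ : ℝ≥0∞) ≤
      ENNReal.ofReal (∫ s in Set.Ioi (t-1), Real.sqrt (h s)) := by
    have hRHS : ENNReal.ofReal (∫ s in Set.Ioi (t-1), Real.sqrt (h s)) =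
        ∑' n : ℕ, ∫⁻ s in Set.Ioc ((t-1) + n) ((t-1) + n + 1),
          ENNReal.ofReal (Real.sqrt (h s)) := by
      rw [ofReal_integral_eq_lintegral_ofReal hsq1
        (Filter.Eventually.of_forall fun s => Real.sqrt_nonneg _),
        union_Ioc (t-1), lintegral_iUnion (fun _ => measurableSet_Ioc) (pd_Ioc (t-1))]
    have hLHS : ∫⁻ s in Set.Ioi t, (‖u' s‖₊ : ℝ≥0∞) =
        ∑' n : ℕ, ∫⁻ s in Set.Ioc (t + n) (t + n + 1), (‖u' s‖₊ : ℝ≥0∞) := by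
      rw [union_Ioc t, lintegral_iUnion (fun _ => measurableSet_Ioc) (pd_Ioc t)]
    rw [hLHS, hRHS]
    refine ENNReal.tsum_le_tsum fun n => ?_
    have htn : (0:ℝ) < t + n := by positivity
    have h1n : (1:ℝ) ≤ t + n := by
      have : (0:ℝ) ≤ n := Nat.cast_nonneg n
      linarith
    have hmn : AEMeasurable (fun s => (‖u' s‖₊ : ℝ≥0∞))
        (volume.restrict (Set.Ioc (t + n) (t + n + 1))) := by
      have hsub : Set.Ioc (t + n) (t + n + 1) ⊆ Set.Ioi (0:ℝ) := fun s hs => by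
        simp only [Set.mem_Ioc] at hs; simp only [Set.mem_Ioi]; linarith [hs.1]
      exact (hm0.mono_measure (Measure.restrict_mono hsub le_rfl)).enorm
    calc ∫⁻ s in Set.Ioc (t + n) (t + n + 1), (‖u' s‖₊ : ℝ≥0∞)
        ≤ ENNReal.ofReal (Real.sqrt (h (t + n))) :=
          unit_bound u' h htn (hpos _ htn.le).le (hint _ htn) (htail _ htn) hmn
      _ ≤ ∫⁻ s in Set.Ioc ((t + n) - 1) (t + n),
            ENNReal.ofReal (Real.sqrt (h s)) := sqrt_bound h h1n hdec hsqrt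
      _ = ∫⁻ s in Set.Ioc ((t-1) + n) ((t-1) + n + 1),
            ENNReal.ofReal (Real.sqrt (h s)) := by ring_nf
  -- integrability of u' on Ioi t
  have hIntOn : IntegrableOn u' (Set.Ioi t) :=
    ⟨hmt, lt_of_le_of_lt hI ENNReal.ofReal_lt_top⟩
  have hII : IntervalIntegrable u' volume t τ := by
    rw [intervalIntegrable_iff, Set.uIoc_of_le htτ]
    exact hIntOn.mono_set fun s hs => hs.1
  -- FTC
  have hftc : ∫ s in t..τ, u' s = u τ - u t := by
    refine intervalIntegral.integral_eq_sub_of_hasDerivAt (fun s hs => ?_) hII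
    rw [Set.uIcc_of_le htτ] at hs
    exact hderiv s (by linarith [hs.1])
  have hnorm : ‖u t - u τ‖ ≤ ∫ s in Set.Ioi t, ‖u' s‖ := by
    calc ‖u t - u τ‖ = ‖∫ s in t..τ, u' s‖ := by rw [hftc, norm_sub_rev]
      _ ≤ ∫ s in t..τ, ‖u' s‖ := intervalIntegral.norm_integral_le_integral_norm htτ
      _ = ∫ s in Set.Ioc t τ, ‖u' s‖ := intervalIntegral.integral_of_le htτ
      _ ≤ ∫ s in Set.Ioi t, ‖u' s‖ := by
          refine setIntegral_mono_set hIntOn.norm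
            (Filter.Eventually.of_forall fun s => norm_nonneg _)
            (HasSubset.Subset.eventuallyLE fun s hs => hs.1)
  have hfin : ENNReal.ofReal (∫ s in Set.Ioi t, ‖u' s‖) =
      ∫⁻ s in Set.Ioi t, (‖u' s‖₊ : ℝ≥0∞) := by
    rw [ofReal_integral_eq_lintegral_ofReal hIntOn.norm
      (Filter.Eventually.of_forall fun s => norm_nonneg _)]
    simp_rw [ofReal_norm, enorm_eq_nnnorm]
  have hfinal : ∫ s in Set.Ioi t, ‖u' s‖ ≤ ∫ s in Set.Ioi (t-1), Real.sqrt (h s) := by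
    rw [← ENNReal.ofReal_le_ofReal_iff (setIntegral_nonneg measurableSet_Ioi
      fun s _ => Real.sqrt_nonneg _), hfin]
    exact hI
  linarith


/-- Generalized Zelenyak lemma for slowly decaying energy tails. -/
theorem stmt1 {H : Type*} [NormedAddCommGroup H] [InnerProductSpace ℝ H]
    (u u' : ℝ → H) (h : ℝ → ℝ)
    (hderiv : ∀ t > (0:ℝ), HasDerivAt u (u' t) t)
    (hint : ∀ t > (0:ℝ), IntegrableOn (fun s => ‖u' s‖ ^ 2) (Set.Ioi t))
    (hcont : Continuous h)
    (hpos : ∀ t ≥ (0:ℝ), 0 < h t)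
    (hdec : AntitoneOn h (Set.Ici 0))
    (hlim : Tendsto h atTop (𝓝 0))
    (hsqrt : IntegrableOn (fun s => Real.sqrt (h s)) (Set.Ioi 0))
    (htail : ∀ t > (0:ℝ), ∫ s in Set.Ioi t, ‖u' s‖ ^ 2 ≤ h t) :
    ∀ t τ : ℝ, 1 < t → t ≤ τ →
      ‖u t - u τ‖ ≤ ∫ s in Set.Ioi (t - 1), Real.sqrt (h s) := by
  set e : H →L[ℝ] UniformSpace.Completion H := UniformSpace.Completion.toComplL with he
  have hne : ∀ x : H, ‖e x‖ = ‖x‖ := fun x => by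
    rw [he, UniformSpace.Completion.coe_toComplL, UniformSpace.Completion.norm_coe]
  intro t τ ht htτ
  have key := stmt1_complete (fun s => e (u s)) (fun s => e (u' s)) h
    (fun s hs => e.hasFDerivAt.comp_hasDerivAt s (hderiv s hs))
    (fun s hs => by simpa only [hne] using hint s hs)
    hcont hpos hdec hlim hsqrt
    (fun s hs => by simpa only [hne] using htail s hs)
    t τ ht htτ
  calc ‖u t - u τ‖ = ‖e (u t) - e (u τ)‖ := by rw [← map_sub, hne]
    _ ≤ _ := key
end

section
/- Let V : [T,∞) → ℝ and h : [T,∞) → (0,∞) be C¹ functions, B ∈ ℝ, C₇ > 0, with (d/dt)[B - V(t)] ≤ -C₇ [B - V(t)] + C₇ h(t), where h is positive, decreasing, and h'(t)/h(t) → 0 as t → ∞. Then for all sufficiently large t, B - V(t) ≤ 2 h(t). -/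
open MeasureTheory Filter Topology

/-- The energy gap is eventually dominated by twice the perturbation amplitude. -/
theorem stmt4 (V V' h h' : ℝ → ℝ) (B T C₇ : ℝ) (hC₇ : 0 < C₇)
    (hV : ∀ t ≥ T, HasDerivAt V (V' t) t)
    (hh : ∀ t ≥ T, HasDerivAt h (h' t) t)
    (hpos : ∀ t ≥ T, 0 < h t)
    (hdec : ∀ t ≥ T, h' t < 0)
    (hratio : Tendsto (fun t => h' t / h t) atTop (𝓝 0))
    (hineq : ∀ t ≥ T, -V' t ≤ -C₇ * (B - V t) + C₇ * h t) :
    ∀ᶠ t in atTop, B - V t ≤ 2 * h t := by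
  obtain ⟨a, ha⟩ := Metric.tendsto_atTop.1 hratio (C₇ / 4) (by positivity)
  set T₁ := max a T with hT₁
  have hT₁T : T ≤ T₁ := le_max_right _ _
  have key : ∀ t, T₁ ≤ t → |h' t| ≤ C₇ / 4 * h t := by
    intro t ht
    have htT : T ≤ t := hT₁T.trans ht
    have h1 := ha t ((le_max_left a T).trans ht)
    rw [Real.dist_eq, sub_zero, abs_div, abs_of_pos (hpos t htT)] at h1
    have := (div_lt_iff₀ (hpos t htT)).1 h1
    linarith
  set K := h T₁ * Real.exp (C₇ * T₁) with hK
  have hKpos : 0 < K := mul_pos (hpos T₁ hT₁T) (Real.exp_pos _)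
  -- P(t) = h(t) e^{C₇ t} is nondecreasing on [T₁, ∞)
  set P := fun t => h t * Real.exp (C₇ * t) with hPdef
  have hexp : ∀ t : ℝ, HasDerivAt (fun x => Real.exp (C₇ * x)) (Real.exp (C₇ * t) * (C₇ * 1)) t :=
    fun t => (Real.hasDerivAt_exp _).comp t ((hasDerivAt_id t).const_mul C₇)
  have hPderiv : ∀ t, T₁ ≤ t → HasDerivAt P ((h' t + C₇ * h t) * Real.exp (C₇ * t)) t := by
    intro t ht
    have := (hh t (hT₁T.trans ht)).mul (hexp t)
    refine this.congr_deriv ?_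
    ring
  have hPmono : MonotoneOn P (Set.Ici T₁) := by
    apply monotoneOn_of_deriv_nonneg (convex_Ici T₁)
    · intro t ht
      exact (hPderiv t ht).continuousAt.continuousWithinAt
    · intro t ht
      rw [interior_Ici] at ht
      exact (hPderiv t ht.le).differentiableAt.differentiableWithinAt
    · intro t ht
      rw [interior_Ici] at ht
      rw [(hPderiv t ht.le).deriv]
      have habs := key t ht.le
      have h1 : -(C₇ / 4 * h t) ≤ h' t := neg_le_of_abs_le habs
      have h2 : 0 < h t := hpos t (hT₁T.trans ht.le)
      have h3 : 0 ≤ h' t + C₇ * h t := by nlinarith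
      exact mul_nonneg h3 (Real.exp_pos _).le
  -- E(t) = e^{C₇ t} (B - V t - 2 h t) + (C₇/2) K t is nonincreasing on [T₁, ∞)
  set E := fun t => Real.exp (C₇ * t) * (B - V t - 2 * h t) + C₇ / 2 * K * t with hEdef
  have hEderiv : ∀ t, T₁ ≤ t → HasDerivAt E
      (Real.exp (C₇ * t) * (C₇ * (B - V t - 2 * h t) + (-V' t - 2 * h' t)) + C₇ / 2 * K) t := by
    intro t ht
    have htT : T ≤ t := hT₁T.trans ht
    have hg : HasDerivAt (fun x => B - V x - 2 * h x) (-V' t - 2 * h' t) t := by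
      have := ((hasDerivAt_const t B).sub (hV t htT)).sub ((hh t htT).const_mul 2)
      refine this.congr_deriv ?_
      ring
    have := ((hexp t).mul hg).add ((hasDerivAt_id t).const_mul (C₇ / 2 * K))
    refine this.congr_deriv ?_
    ring
  have hEanti : AntitoneOn E (Set.Ici T₁) := by
    apply antitoneOn_of_deriv_nonpos (convex_Ici T₁)
    · intro t ht
      exact (hEderiv t ht).continuousAt.continuousWithinAt
    · intro t ht
      rw [interior_Ici] at ht
      exact (hEderiv t ht.le).differentiableAt.differentiableWithinAt
    · intro t ht
      rw [interior_Ici] at ht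
      rw [(hEderiv t ht.le).deriv]
      have htT : T ≤ t := hT₁T.trans ht.le
      have habs := key t ht.le
      have h1 : -(C₇ / 4 * h t) ≤ h' t := neg_le_of_abs_le habs
      have h2 := hineq t htT
      have h3 : 0 < h t := hpos t htT
      have hA : C₇ * (B - V t - 2 * h t) + (-V' t - 2 * h' t) ≤ -(C₇ / 2) * h t := by
        nlinarith
      have hPt : K ≤ P t := by
        have := hPmono (Set.self_mem_Ici) (Set.mem_Ici.2 ht.le) ht.le
        simpa [hPdef, hK] using this
      have hexppos : (0:ℝ) < Real.exp (C₇ * t) := Real.exp_pos _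
      have h5 : Real.exp (C₇ * t) * (C₇ * (B - V t - 2 * h t) + (-V' t - 2 * h' t))
          ≤ Real.exp (C₇ * t) * (-(C₇ / 2) * h t) :=
        mul_le_mul_of_nonneg_left hA hexppos.le
      have h6 : Real.exp (C₇ * t) * (-(C₇ / 2) * h t) = -(C₇ / 2) * P t := by
        simp only [hPdef]; ring
      nlinarith
  -- conclude
  filter_upwards [eventually_ge_atTop T₁, eventually_ge_atTop (E T₁ / (C₇ / 2 * K))]
    with t ht1 ht2
  have hEt : E t ≤ E T₁ := hEanti Set.self_mem_Ici ht1 ht1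
  have hpos2 : (0:ℝ) < C₇ / 2 * K := by positivity
  have h2 : E T₁ ≤ C₇ / 2 * K * t := (div_le_iff₀' hpos2).1 ht2
  have h3 : Real.exp (C₇ * t) * (B - V t - 2 * h t) ≤ 0 := by
    have : Real.exp (C₇ * t) * (B - V t - 2 * h t) + C₇ / 2 * K * t ≤ E T₁ := hEt
    linarith
  have hexppos : (0:ℝ) < Real.exp (C₇ * t) := Real.exp_pos _
  nlinarith
end

section
/- Define V(u) = (1/2) e^{-1/u²} for u ≠ 0 and V(0) = 0, so that V'(u) = u^{-3} e^{-1/u²} for u ≠ 0. Then with the modulus ω̃(s) = 2|s| |ln(2s)|^{3/2} (for 0 < s < 1/2), the generalized gradient inequality ω̃(V(u)) ≤ |V'(u)| holds for all u sufficiently close to 0, u ≠ 0. -/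
open Real Filter Topology

/-- The generalized gradient inequality with the modulus
`ω̃(s) = 2|s| |ln(2s)|^{3/2}` holds for `V(u) = (1/2) e^{-1/u²}` near `u = 0`. -/
theorem stmt6 :
    ∃ δ > (0:ℝ), ∀ u : ℝ, u ≠ 0 → |u| < δ →
      2 * |(1 / 2 : ℝ) * Real.exp (-1 / u ^ 2)| *
          |Real.log (2 * ((1 / 2 : ℝ) * Real.exp (-1 / u ^ 2)))| ^ ((3 : ℝ) / 2)
        ≤ |(u ^ 3)⁻¹ * Real.exp (-1 / u ^ 2)| := by
  refine ⟨1, one_pos, fun u hu _ => ?_⟩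
  have hu2 : (0:ℝ) < u ^ 2 := by positivity
  have hexp : (0:ℝ) < Real.exp (-1 / u ^ 2) := Real.exp_pos _
  have h1 : 2 * ((1 / 2 : ℝ) * Real.exp (-1 / u ^ 2)) = Real.exp (-1 / u ^ 2) := by ring
  rw [h1, Real.log_exp]
  have h2 : |(1 / 2 : ℝ) * Real.exp (-1 / u ^ 2)| = (1 / 2 : ℝ) * Real.exp (-1 / u ^ 2) :=
    abs_of_pos (by positivity)
  have h3 : |(-1 : ℝ) / u ^ 2| = (u ^ 2)⁻¹ := by
    rw [abs_div, abs_neg, abs_one, abs_of_pos hu2, one_div]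
  rw [h2, h3]
  have h4 : ((u ^ 2)⁻¹ : ℝ) ^ ((3:ℝ)/2) = (|u| ^ 3)⁻¹ := by
    rw [Real.inv_rpow hu2.le]
    congr 1
    rw [← sq_abs, ← Real.rpow_natCast |u| 2, ← Real.rpow_mul (abs_nonneg u),
      ← Real.rpow_natCast |u| 3]
    norm_num
  rw [h4, abs_mul, abs_inv, abs_pow, abs_of_pos hexp]
  rw [mul_comm ((|u| ^ 3)⁻¹)]
  ring_nf
  exact le_refl _
end

section
/- With the explicit coefficient formula aₖ(t) = aₖ(0)e^{(λ_l−λₖ)t}/√(1 + 2a_l(0)²t + Σ_{λₘ≠λ_l}(λ_l−λₘ)^{-1}(e^{2(λ_l−λₘ)t}−1)aₘ(0)²), if the smallest index j with a_j(0) ≠ 0 satisfies λ_j = λ_l, then |a(t)|² = O(1/t) as t → ∞; more precisely |a(t)|² ≤ C/t for some C > 0 and all large t. -/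
open MeasureTheory Filter Topology

/-- Case (ii): if the lowest excited mode has eigenvalue `λ_l`, then
`|a(t)|² = O(1/t)` as `t → ∞`. -/
theorem stmt11 (lam : ℕ → ℝ) (l j : ℕ) (a0 : ℕ → ℝ)
    (hfin : (Function.support a0).Finite)
    (hmono : Monotone lam)
    (hmin : ∀ k < j, a0 k = 0)
    (hj : a0 j ≠ 0)
    (heq : lam j = lam l)
    (a : ℕ → ℝ → ℝ)
    (ha : ∀ k t, a k t = a0 k * Real.exp ((lam l - lam k) * t) /
      Real.sqrt (1 + 2 * (∑' i : {i // lam i = lam l}, (a0 i.1) ^ 2) * t +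
        ∑' m : {m // lam m ≠ lam l},
          (lam l - lam m.1)⁻¹ * (Real.exp (2 * (lam l - lam m.1) * t) - 1) * (a0 m.1) ^ 2)) :
    ∃ C > (0:ℝ), ∀ᶠ t in atTop, (∑' k, (a k t) ^ 2) ≤ C / t := by
  -- summability of squares
  have hBs : Summable (fun k => (a0 k) ^ 2) := by
    apply summable_of_ne_finset_zero (s := hfin.toFinset)
    intro b hb
    have : a0 b = 0 := by
      by_contra h
      exact hb (hfin.mem_toFinset.2 h)
    simp [this]
  set A : ℝ := ∑' i : {i // lam i = lam l}, (a0 i.1) ^ 2 with hAdef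
  set B : ℝ := ∑' k, (a0 k) ^ 2 with hBdef
  have hAs : Summable (fun i : {i // lam i = lam l} => (a0 i.1) ^ 2) :=
    hBs.subtype _
  have hA : 0 < A := by
    refine Summable.tsum_pos hAs (fun i => sq_nonneg _) ⟨j, heq⟩ ?_
    positivity
  have hB : 0 < B :=
    Summable.tsum_pos hBs (fun k => sq_nonneg _) j (by positivity)
  -- key: every nonzero mode has eigenvalue ≥ lam l
  have hge : ∀ k, a0 k ≠ 0 → lam l ≤ lam k := by
    intro k hk
    have hjk : j ≤ k := by
      by_contra h
      exact hk (hmin k (lt_of_not_ge h))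
    calc lam l = lam j := heq.symm
      _ ≤ lam k := hmono hjk
  refine ⟨B / (2 * A), by positivity, ?_⟩
  filter_upwards [eventually_ge_atTop (1 : ℝ)] with t ht
  have ht0 : (0 : ℝ) < t := lt_of_lt_of_le one_pos ht
  set S : ℝ := ∑' m : {m // lam m ≠ lam l},
      (lam l - lam m.1)⁻¹ * (Real.exp (2 * (lam l - lam m.1) * t) - 1) * (a0 m.1) ^ 2 with hSdef
  have hS : 0 ≤ S := by
    refine tsum_nonneg fun m => ?_
    rcases eq_or_ne (a0 m.1) 0 with h | h
    · simp [h]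
    · have h1 : lam l < lam m.1 := lt_of_le_of_ne (hge m.1 h) (Ne.symm m.2)
      have h2 : (lam l - lam m.1)⁻¹ ≤ 0 := inv_nonpos.2 (by linarith)
      have h3 : Real.exp (2 * (lam l - lam m.1) * t) - 1 ≤ 0 := by
        have : 2 * (lam l - lam m.1) * t ≤ 0 := by nlinarith
        have := Real.exp_le_one_iff.2 this
        linarith
      have h4 : 0 ≤ (lam l - lam m.1)⁻¹ * (Real.exp (2 * (lam l - lam m.1) * t) - 1) := by
        nlinarith
      exact mul_nonneg h4 (sq_nonneg _)
  set D : ℝ := 1 + 2 * A * t + S with hDdef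
  have hD2 : 2 * A * t ≤ D := by
    simp only [hDdef]; linarith
  have hD : 0 < D := lt_of_lt_of_le (by positivity) hD2
  -- termwise bound
  have hterm : ∀ k, (a k t) ^ 2 ≤ (a0 k) ^ 2 / D := by
    intro k
    rw [ha]
    rcases eq_or_ne (a0 k) 0 with h | h
    · simp [h]
    · have hle : lam l - lam k ≤ 0 := by
        have := hge k h; linarith
      have hexp : Real.exp ((lam l - lam k) * t) ^ 2 ≤ 1 := by
        have h1 : Real.exp ((lam l - lam k) * t) ≤ 1 :=
          Real.exp_le_one_iff.2 (mul_nonpos_of_nonpos_of_nonneg hle ht0.le)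
        nlinarith [Real.exp_pos ((lam l - lam k) * t)]
      rw [div_pow, mul_pow, Real.sq_sqrt hD.le]
      calc (a0 k) ^ 2 * Real.exp ((lam l - lam k) * t) ^ 2 / D
          ≤ (a0 k) ^ 2 * 1 / D := by gcongr
        _ = (a0 k) ^ 2 / D := by ring
  -- summability of the LHS
  have has : Summable (fun k => (a k t) ^ 2) := by
    apply summable_of_ne_finset_zero (s := hfin.toFinset)
    intro b hb
    have hb0 : a0 b = 0 := by
      by_contra h
      exact hb (hfin.mem_toFinset.2 h)
    rw [ha]
    simp [hb0]
  have hsum : (∑' k, (a k t) ^ 2) ≤ B / D := by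
    have : (∑' k, (a k t) ^ 2) ≤ ∑' k, (a0 k) ^ 2 / D :=
      Summable.tsum_le_tsum hterm has (hBs.div_const D)
    rwa [tsum_div_const] at this
  refine hsum.trans ?_
  rw [div_div]
  exact div_le_div_of_nonneg_left hB.le (by positivity) (by linarith)
end

section
/- In the setting of the non-local equation, let ψ̂ = Σᵢ₌₁^{k+1} ĉᵢ ψ_{j,i} with Σ ĉᵢ² = λ_l − λ_j be an equilibrium, and let V''(ψ̂)v = Δv + λ_l v − 2ψ̂⟨ψ̂, v⟩ − (∫ψ̂²)v be the linearization. Then for v = Σᵢ bᵢ ψ_{j,i} in the eigenspace of λ_j, one has V''(ψ̂)v = 0 if and only if Σᵢ bᵢ ĉᵢ = 0; hence the kernel of V''(ψ̂) restricted to this eigenspace is exactly k-dimensional. -/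
open MeasureTheory Filter Topology RealInnerProductSpace

/-- The kernel of the linearization `V''(ψ̂)` restricted to the eigenspace of
`λ_j` is given by `Σ bᵢ ĉᵢ = 0`, hence is exactly `k`-dimensional. -/
theorem stmt14 {H : Type*} [NormedAddCommGroup H] [InnerProductSpace ℝ H]
    (Δ : H →ₗ[ℝ] H) (k : ℕ) (hk : 1 ≤ k)
    (laml lamj : ℝ) (hlam : lamj < laml)
    (ψ : Fin (k + 1) → H) (hON : Orthonormal ℝ ψ)
    (hΔ : ∀ i, Δ (ψ i) = (-lamj) • ψ i)
    (c : Fin (k + 1) → ℝ) (hsum : (∑ i, (c i) ^ 2) = laml - lamj)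
    (ψhat : H) (hψhat : ψhat = ∑ i, c i • ψ i) :
    (∀ b : Fin (k + 1) → ℝ, ∀ v : H, v = ∑ i, b i • ψ i →
      (Δ v + laml • v - (2 * inner ℝ ψhat v : ℝ) • ψhat - ‖ψhat‖ ^ 2 • v = 0 ↔
        (∑ i, b i * c i) = 0)) ∧
    Module.finrank ℝ
      (LinearMap.ker (∑ i, c i • (LinearMap.proj i : (Fin (k + 1) → ℝ) →ₗ[ℝ] ℝ))) = k := by
  have hnn : (inner ℝ ψhat ψhat : ℝ) = laml - lamj := by
    rw [hψhat, hON.inner_sum]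
    simpa [sq] using hsum
  have hnorm : ‖ψhat‖ ^ 2 = laml - lamj := by
    rw [← real_inner_self_eq_norm_sq, hnn]
  have hψne : ψhat ≠ 0 := by
    intro h
    rw [h, inner_zero_left] at hnn
    linarith
  constructor
  · intro b v hv
    have hinner : (inner ℝ ψhat v : ℝ) = ∑ i, b i * c i := by
      rw [hψhat, hv, hON.inner_sum]
      simp [mul_comm]
    have hΔv : Δ v = (-lamj) • v := by
      rw [hv, map_sum]
      simp only [_root_.map_smul, hΔ]
      rw [Finset.smul_sum]
      simp [smul_smul, mul_comm]
    have hexp : Δ v + laml • v - (2 * (inner ℝ ψhat v : ℝ)) • ψhat - ‖ψhat‖ ^ 2 • v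
        = -((2 * (inner ℝ ψhat v : ℝ)) • ψhat) := by
      rw [hΔv, hnorm]
      module
    rw [hexp, hinner]
    constructor
    · intro h
      have h2 : (2 * ∑ i, b i * c i) • ψhat = 0 := by
        rw [← neg_eq_zero]; exact h
      rcases smul_eq_zero.mp h2 with h3 | h3
      · linarith [h3]
      · exact absurd h3 hψne
    · intro h
      rw [h]
      simp
  · have hf : (∑ i, c i • (LinearMap.proj i : (Fin (k + 1) → ℝ) →ₗ[ℝ] ℝ)) ≠ 0 := by
      intro h
      have : ∀ i, c i = 0 := by
        intro i
        have := congrArg (fun f => f (Pi.single i 1)) h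
        simpa [LinearMap.sum_apply, Pi.single_apply, Finset.sum_ite_eq'] using this
      have : (∑ i, (c i) ^ 2) = 0 := by simp [this]
      rw [hsum] at this
      linarith
    have hrange : Module.finrank ℝ
        (LinearMap.range (∑ i, c i • (LinearMap.proj i : (Fin (k + 1) → ℝ) →ₗ[ℝ] ℝ))) = 1 := by
      rw [LinearMap.range_eq_top.mpr (LinearMap.surjective_of_ne_zero hf)]
      simp
    have := LinearMap.finrank_range_add_finrank_ker
      (∑ i, c i • (LinearMap.proj i : (Fin (k + 1) → ℝ) →ₗ[ℝ] ℝ))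
    rw [hrange] at this
    simp [Module.finrank_pi] at this
    omega
end
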